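/- There is no labeling v_1 < v_2 < v_3 < v_4 < v_5 of the vertices of the tight 5-cycle C_5 (edges v1v2v3, v2v3v4, v3v4v5, v4v5v1, v5v1v2) together with a 3-coloring φ of pairs such that every edge {a,b,c} with a<b<c has φ(a,b) red, φ(a,c) blue, φ(b,c) green. That is, C_5 does not satisfy the Reiher–Rödl–Schacht zero-uniform-Turán-density condition. -/
import Mathlib


open Finset

/-- The edges of the tight 5-cycle `C_5` on `Fin 5`:
012, 123, 234, 340, 401. -/
def C5edges : Finset (Finset (Fin 5)) :=
  {({0, 1, 2} : Finset (Fin 5)), ({1, 2, 3} : Finset (Fin 5)), ({2, 3, 4} : Finset (Fin 5)),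
   ({3, 4, 0} : Finset (Fin 5)), ({4, 0, 1} : Finset (Fin 5))}

/-- position class of `x` relative to the pair `{u,v}`. -/
def cls' (x u v : ℕ) : Fin 3 :=
  if x < u ∧ x < v then 0 else if u < x ∧ v < x then 2 else 1

lemma cls'_symm (a b c : ℕ) : cls' a b c = cls' a c b := by
  unfold cls'; split_ifs <;> first | rfl | (exfalso; omega)

lemma edge_ne : ∀ x y z : Fin 5, ({x, y, z} : Finset (Fin 5)) ∈ C5edges →
    x ≠ y ∧ x ≠ z ∧ y ≠ z := by decide

lemma swap12 (a b c : Fin 5) : ({a, b, c} : Finset (Fin 5)) = {b, a, c} := by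
  ext t; simp [or_comm, or_left_comm]

lemma swap23 (a b c : Fin 5) : ({a, b, c} : Finset (Fin 5)) = {a, c, b} := by
  ext t; simp [or_comm, or_left_comm]

set_option maxRecDepth 10000 in
set_option synthInstance.maxSize 2000 in
set_option synthInstance.maxHeartbeats 1000000 in
lemma C5_cls : ∀ y0 y1 y2 y3 y4 : Fin 5,
    y0 ≠ y1 → y0 ≠ y2 → y0 ≠ y3 → y0 ≠ y4 → y1 ≠ y2 → y1 ≠ y3 → y1 ≠ y4 →
    y2 ≠ y3 → y2 ≠ y4 → y3 ≠ y4 →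
    cls' y0.val y1.val y2.val = cls' y3.val y1.val y2.val →
    cls' y1.val y2.val y3.val = cls' y4.val y2.val y3.val →
    cls' y2.val y3.val y4.val = cls' y0.val y3.val y4.val →
    cls' y3.val y4.val y0.val = cls' y1.val y4.val y0.val →
    cls' y4.val y0.val y1.val = cls' y2.val y0.val y1.val → False := by decide

section
variable (f : Fin 5 → Fin 5) (φ : Fin 5 → Fin 5 → Fin 3)

lemma pairCol (hf : Function.Injective f)
    (h : ∀ a b c : Fin 5, ({a, b, c} : Finset (Fin 5)) ∈ C5edges →
      f a < f b → f b < f c → (φ a b = 0 ∧ φ a c = 1 ∧ φ b c = 2)) :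
    ∀ x y z : Fin 5, ({x, y, z} : Finset (Fin 5)) ∈ C5edges → f y < f z →
      (φ y z = 2 ∧ cls' (f x).val (f y).val (f z).val = 0) ∨
      (φ y z = 1 ∧ cls' (f x).val (f y).val (f z).val = 1) ∨
      (φ y z = 0 ∧ cls' (f x).val (f y).val (f z).val = 2) := by
  intro x y z hm hyz
  obtain ⟨hxy, hxz, -⟩ := edge_ne x y z hm
  rcases lt_trichotomy (f x) (f y) with h1 | h1 | h1
  · left
    refine ⟨(h x y z hm h1 hyz).2.2, ?_⟩
    have h2 : f x < f z := lt_trans h1 hyz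
    unfold cls'
    rw [if_pos ⟨h1, h2⟩]
  · exact absurd (hf h1) hxy
  · rcases lt_trichotomy (f x) (f z) with h2 | h2 | h2
    · right; left
      have hm' : ({y, x, z} : Finset (Fin 5)) ∈ C5edges := by rwa [← swap12]
      refine ⟨(h y x z hm' h1 h2).2.1, ?_⟩
      unfold cls'
      rw [if_neg (by omega), if_neg (by omega)]
    · exact absurd (hf h2) hxz
    · right; right
      have hm' : ({y, z, x} : Finset (Fin 5)) ∈ C5edges := by
        rw [swap23]; rwa [← swap12]
      refine ⟨(h y z x hm' hyz h2).1, ?_⟩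
      unfold cls'
      rw [if_neg (by omega), if_pos ⟨h1, h2⟩]

lemma clash (hf : Function.Injective f)
    (h : ∀ a b c : Fin 5, ({a, b, c} : Finset (Fin 5)) ∈ C5edges →
      f a < f b → f b < f c → (φ a b = 0 ∧ φ a c = 1 ∧ φ b c = 2)) :
    ∀ x w y z : Fin 5, ({x, y, z} : Finset (Fin 5)) ∈ C5edges →
      ({w, y, z} : Finset (Fin 5)) ∈ C5edges → f y ≠ f z →
      cls' (f x).val (f y).val (f z).val = cls' (f w).val (f y).val (f z).val := by
  intro x w y z hm1 hm2 hyz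
  rcases lt_or_gt_of_ne hyz with hlt | hgt
  · rcases pairCol f φ hf h x y z hm1 hlt with ⟨p1, c1⟩ | ⟨p1, c1⟩ | ⟨p1, c1⟩ <;>
      rcases pairCol f φ hf h w y z hm2 hlt with ⟨p2, c2⟩ | ⟨p2, c2⟩ | ⟨p2, c2⟩ <;>
      simp_all
  · have hm1' : ({x, z, y} : Finset (Fin 5)) ∈ C5edges := by rwa [← swap23]
    have hm2' : ({w, z, y} : Finset (Fin 5)) ∈ C5edges := by rwa [← swap23]
    rw [cls'_symm (f x).val, cls'_symm (f w).val]
    rcases pairCol f φ hf h x z y hm1' hgt with ⟨p1, c1⟩ | ⟨p1, c1⟩ | ⟨p1, c1⟩ <;>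
      rcases pairCol f φ hf h w z y hm2' hgt with ⟨p2, c2⟩ | ⟨p2, c2⟩ | ⟨p2, c2⟩ <;>
      simp_all

end

/-- There is no vertex ordering (injective labeling `f`) and 3-coloring
(`0` = red, `1` = blue, `2` = green) of pairs such that every edge of the tight
cycle `C_5`, listed with vertices increasing under `f`, has its smallest pair red,
its outer pair blue and its largest pair green: `C_5` does not satisfy the
Reiher–Rödl–Schacht zero-uniform-Turán-density condition. -/
theorem C5_no_RRS_coloring :
    ¬ ∃ (f : Fin 5 → Fin 5) (φ : Fin 5 → Fin 5 → Fin 3), Function.Injective f ∧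
      ∀ a b c : Fin 5, ({a, b, c} : Finset (Fin 5)) ∈ C5edges →
        f a < f b → f b < f c → (φ a b = 0 ∧ φ a c = 1 ∧ φ b c = 2) := by
  rintro ⟨f, φ, hf, h⟩
  have hne : ∀ i j : Fin 5, i ≠ j → f i ≠ f j := fun i j hij e => hij (hf e)
  exact C5_cls (f 0) (f 1) (f 2) (f 3) (f 4)
    (hne 0 1 (by decide)) (hne 0 2 (by decide)) (hne 0 3 (by decide)) (hne 0 4 (by decide))
    (hne 1 2 (by decide)) (hne 1 3 (by decide)) (hne 1 4 (by decide))
    (hne 2 3 (by decide)) (hne 2 4 (by decide)) (hne 3 4 (by decide))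
    (clash f φ hf h 0 3 1 2 (by decide) (by decide) (hne 1 2 (by decide)))
    (clash f φ hf h 1 4 2 3 (by decide) (by decide) (hne 2 3 (by decide)))
    (clash f φ hf h 2 0 3 4 (by decide) (by decide) (hne 3 4 (by decide)))
    (clash f φ hf h 3 1 4 0 (by decide) (by decide) (hne 4 0 (by decide)))
    (clash f φ hf h 4 2 0 1 (by decide) (by decide) (hne 0 1 (by decide)))
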